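/- Let Φ : ℝ → Matrix (Fin n) (Fin n) ℝ satisfy Φ' = A·Φ, Φ(0) = I, with A continuous and ω-periodic, and suppose Φ(ω) = I (i.e., M(ω) = 0 where M = Φ − I). Let V₁(s) be the first row of Φ(s) applied to an initial orthonormal frame; then the curve x(s) = ∫₀^s V₁(t) dt is periodic of period ω if and only if ω·a₁ⱼ + ∑ᵢ aᵢⱼ ∫₀^ω m₁ᵢ(s) ds = 0 for all j, where (aᵢⱼ) is the invertible initial frame matrix and m₁ᵢ are the entries of the first row of M. Since (aᵢⱼ) is invertible, this is equivalent to ω + ∫₀^ω m₁₁ ds = 0 and ∫₀^ω m₁ᵢ ds = 0 for i = 2,…,n. -/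

import Mathlib

open Matrix

open MeasureTheory Set in
private lemma intervalIntegral_pi_apply {ι : Type*} [Fintype ι] {f : ℝ → ι → ℝ} {a b : ℝ}
    (hf : IntervalIntegrable f volume a b) (i : ι) :
    (∫ t in a..b, f t) i = ∫ t in a..b, f t i := by
  simpa using (ContinuousLinearMap.proj (R := ℝ) (φ := fun _ : ι => ℝ) i).intervalIntegral_comp_comm
    hf |>.symm

/-- Closedness criterion in terms of the fundamental matrix and an initial orthonormal frame:
with `Φ' = AΦ`, `Φ(0) = I`, `A` continuous ω-periodic, `Φ(ω) = I`, `a` invertible, `M = Φ − I`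
and `x(s) = ∫₀^s (Φ(t)·a)` first row, the curve `x` is ω-periodic iff
`ω·a₁ⱼ + ∑ᵢ aᵢⱼ ∫₀^ω m₁ᵢ = 0` for all `j`, which in turn is equivalent to
`ω + ∫₀^ω m₁₁ = 0` and `∫₀^ω m₁ᵢ = 0` for `i ≠ 1`. -/
theorem stmt_5 {n : ℕ} (ω : ℝ) (hω : 0 < ω)
    (A Φ : ℝ → Matrix (Fin (n+1)) (Fin (n+1)) ℝ)
    (hAcont : Continuous fun s => A s)
    (hAper : ∀ s, A (s + ω) = A s)
    (hΦ : ∀ s i j, HasDerivAt (fun t => Φ t i j) ((A s * Φ s) i j) s)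
    (hΦ0 : Φ 0 = 1)
    (hΦω : Φ ω = 1)
    (a : Matrix (Fin (n+1)) (Fin (n+1)) ℝ) (ha : IsUnit a)
    (x : ℝ → Fin (n+1) → ℝ)
    (hx : ∀ s, x s = ∫ t in (0:ℝ)..s, (Φ t * a) 0) :
    ((∀ s, x (s + ω) = x s) ↔
      ∀ j, ω * a 0 j + ∑ i, a i j * ∫ s in (0:ℝ)..ω, (Φ s - 1) 0 i = 0) ∧
    ((∀ j, ω * a 0 j + ∑ i, a i j * ∫ s in (0:ℝ)..ω, (Φ s - 1) 0 i = 0) ↔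
      (ω + ∫ s in (0:ℝ)..ω, (Φ s - 1) 0 0 = 0 ∧
        ∀ i, i ≠ 0 → (∫ s in (0:ℝ)..ω, (Φ s - 1) 0 i) = 0)) := by
  classical
  set E := Fin (n+1) → Fin (n+1) → ℝ
  set F : ℝ → E := fun s => fun i j => Φ s i j with hFdef
  -- entrywise continuity of Φ
  have hΦcont : ∀ i j, Continuous fun t => Φ t i j := fun i j =>
    continuous_iff_continuousAt.2 fun t => (hΦ t i j).continuousAt
  -- the vector field
  set v : ℝ → E → E := fun t M => fun i j => ∑ k, A t i k * M k j with hvdef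
  have hF : ∀ s, HasDerivAt F (v s (F s)) s := by
    intro s
    rw [hasDerivAt_pi]
    intro i
    rw [hasDerivAt_pi]
    intro j
    simpa [hFdef, hvdef, Matrix.mul_apply] using hΦ s i j
  -- global bound on the entries of A
  set NA : ℝ → E := fun s => fun i j => A s i j with hNAdef
  have hNAcont : Continuous NA := by
    refine continuous_pi fun i => continuous_pi fun j => ?_
    exact ((continuous_apply j).comp ((continuous_apply i).comp hAcont))
  have hNAper : Function.Periodic NA ω := fun s => by
    funext i j
    exact congrFun (congrFun (hAper s) i) j
  obtain ⟨C, hC⟩ := (isCompact_Icc (a := (0:ℝ)) (b := ω)).exists_bound_of_continuousOn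
    hNAcont.continuousOn
  set C' := max C 0 with hC'def
  have hC'0 : 0 ≤ C' := le_max_right _ _
  have hCglob : ∀ t, ‖NA t‖ ≤ C' := by
    intro t
    obtain ⟨y, hy, hxy⟩ := hNAper.exists_mem_Ico₀ hω t
    rw [hxy]
    exact le_trans (hC y (Set.Ico_subset_Icc_self hy)) (le_max_left _ _)
  have hentry : ∀ t i k, |A t i k| ≤ C' := by
    intro t i k
    calc |A t i k| = ‖NA t i k‖ := rfl
      _ ≤ ‖NA t i‖ := norm_le_pi_norm (NA t i) k
      _ ≤ ‖NA t‖ := norm_le_pi_norm (NA t) i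
      _ ≤ C' := hCglob t
  -- Lipschitz constant
  set K : NNReal := ⟨(n+1) * C', by positivity⟩ with hKdef
  have hKcoe : (K : ℝ) = (n+1) * C' := rfl
  have hlip : ∀ t, LipschitzWith K (v t) := by
    intro t
    apply LipschitzWith.of_dist_le_mul
    intro M N
    rw [dist_eq_norm, dist_eq_norm, hKcoe]
    have hsub : v t M - v t N = fun i j => ∑ k, A t i k * (M k j - N k j) := by
      funext i j
      show (∑ k, A t i k * M k j) - (∑ k, A t i k * N k j) = ∑ k, A t i k * (M k j - N k j)
      simp [mul_sub, Finset.sum_sub_distrib]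
    rw [hsub]
    have h1 : (0:ℝ) ≤ (n+1) * C' * ‖M - N‖ := by positivity
    refine pi_norm_le_iff_of_nonneg h1 |>.2 fun i => ?_
    refine pi_norm_le_iff_of_nonneg h1 |>.2 fun j => ?_
    have hMN : ∀ k, |M k j - N k j| ≤ ‖M - N‖ := by
      intro k
      calc |M k j - N k j| = ‖(M - N) k j‖ := rfl
        _ ≤ ‖(M - N) k‖ := norm_le_pi_norm ((M - N) k) j
        _ ≤ ‖M - N‖ := norm_le_pi_norm (M - N) k
    calc ‖∑ k, A t i k * (M k j - N k j)‖
        ≤ ∑ k, ‖A t i k * (M k j - N k j)‖ := norm_sum_le _ _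
      _ ≤ ∑ _k : Fin (n+1), C' * ‖M - N‖ := by
          refine Finset.sum_le_sum fun k _ => ?_
          rw [norm_mul]
          exact mul_le_mul (hentry t i k) (hMN k) (abs_nonneg _) hC'0
      _ = (n+1) * C' * ‖M - N‖ := by
          rw [Finset.sum_const, Finset.card_univ, Fintype.card_fin]
          push_cast
          ring
  -- periodicity of the fundamental solution
  have hFper : ∀ s, F (s + ω) = F s := by
    intro s
    have hv' : ∀ t, LipschitzOnWith K (v t) Set.univ := fun t => (hlip t).lipschitzOnWith
    have ht0 : (0:ℝ) ∈ Set.Ioo (-(|s|+1)) (|s|+1) := by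
      constructor <;> nlinarith [abs_nonneg s]
    have hg' : ∀ t : ℝ, HasDerivAt (fun u => F (u + ω)) (v t (F (t + ω))) t := by
      intro t
      have h2 : HasDerivAt (fun u : ℝ => u + ω) 1 t := (hasDerivAt_id t).add_const ω
      have := HasDerivAt.scomp (g₁ := F) t (hF (t + ω)) h2
      rw [one_smul] at this
      have hvv : v (t + ω) (F (t + ω)) = v t (F (t + ω)) := by
        funext i j
        simp only [hvdef]
        congr 1
        funext k
        rw [congrFun (congrFun (hAper t) i) k]
      rwa [hvv] at this
    have heq : F (0 + ω) = F 0 := by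
      funext i j
      simp [hFdef, zero_add, hΦω, hΦ0]
    have hEq := ODE_solution_unique_of_mem_Icc (v := v) (s := fun _ => (Set.univ : Set E))
      (f := fun u => F (u + ω)) (g := F) (a := -(|s|+1)) (b := |s|+1) (t₀ := 0)
      (fun t _ => hv' t) ht0
      (fun t _ => ((hg' t).continuousAt.continuousWithinAt))
      (fun t _ => hg' t)
      (fun t _ => Set.mem_univ _)
      (fun t _ => ((hF t).continuousAt.continuousWithinAt))
      (fun t _ => hF t)
      (fun t _ => Set.mem_univ _)
      heq
    exact hEq ⟨by linarith [neg_abs_le s], by linarith [le_abs_self s]⟩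
  -- Φ is ω-periodic
  have hΦper : ∀ s, Φ (s + ω) = Φ s := by
    intro s
    ext i j
    exact congrFun (congrFun (hFper s) i) j
  -- the integrand
  set f0 : ℝ → (Fin (n+1) → ℝ) := fun t => (Φ t * a) 0 with hf0def
  have hf0cont : Continuous f0 := by
    refine continuous_pi fun j => ?_
    simp only [hf0def, Matrix.mul_apply]
    exact continuous_finset_sum _ fun k _ => (hΦcont 0 k).mul continuous_const
  have hf0int : ∀ u w : ℝ, IntervalIntegrable f0 MeasureTheory.volume u w := fun u w =>
    hf0cont.intervalIntegrable u w
  have hf0per : Function.Periodic f0 ω := fun s => by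
    simp only [hf0def, hΦper s]
  have hmint : ∀ i, IntervalIntegrable (fun s => (Φ s - 1) 0 i) MeasureTheory.volume 0 ω := by
    intro i
    have : Continuous fun s => (Φ s - 1) 0 i := by
      have : (fun s => (Φ s - 1) 0 i) = fun s => Φ s 0 i - (1 : Matrix (Fin (n+1)) (Fin (n+1)) ℝ) 0 i := by
        funext s; simp [Matrix.sub_apply]
      rw [this]
      exact (hΦcont 0 i).sub continuous_const
    exact this.intervalIntegrable 0 ω
  -- the key reduction
  have hkey : (∀ s, x (s + ω) = x s) ↔ (∫ t in (0:ℝ)..ω, f0 t) = 0 := by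
    constructor
    · intro h
      have h0 := h 0
      rw [hx, hx] at h0
      rw [zero_add] at h0
      simpa using h0
    · intro h s
      rw [hx, hx]
      rw [← intervalIntegral.integral_add_adjacent_intervals (hf0int 0 s) (hf0int s (s+ω))]
      rw [hf0per.intervalIntegral_add_eq s 0, zero_add, h, add_zero]
  -- component formula
  have hcomp : ∀ j, (∫ t in (0:ℝ)..ω, f0 t) j
      = ω * a 0 j + ∑ i, a i j * ∫ s in (0:ℝ)..ω, (Φ s - 1) 0 i := by
    intro j
    rw [intervalIntegral_pi_apply (hf0int 0 ω) j]
    have h1 : (fun t => f0 t j) = fun t => ∑ k, Φ t 0 k * a k j := by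
      funext t; simp [hf0def, Matrix.mul_apply]
    rw [h1]
    rw [intervalIntegral.integral_finset_sum (f := fun k t => Φ t 0 k * a k j) (fun k _ =>
      ((hΦcont 0 k).mul continuous_const).intervalIntegrable 0 ω)]
    have h2 : ∀ k, (∫ t in (0:ℝ)..ω, Φ t 0 k * a k j)
        = ((∫ t in (0:ℝ)..ω, (Φ t - 1) 0 k) + ω * (1 : Matrix (Fin (n+1)) (Fin (n+1)) ℝ) 0 k) * a k j := by
      intro k
      rw [intervalIntegral.integral_mul_const]
      congr 1
      have h3 : (fun t => Φ t 0 k) = fun t => (Φ t - 1) 0 k + (1 : Matrix (Fin (n+1)) (Fin (n+1)) ℝ) 0 k := by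
        funext t; simp [Matrix.sub_apply]
      rw [h3, intervalIntegral.integral_add (hmint k)
        (intervalIntegrable_const), intervalIntegral.integral_const]
      simp [smul_eq_mul]
    simp only [h2]
    have h4 : ∑ k, ω * (1 : Matrix (Fin (n+1)) (Fin (n+1)) ℝ) 0 k * a k j = ω * a 0 j := by
      simp [Matrix.one_apply, mul_ite, ite_mul, Finset.mul_sum]
    calc ∑ k, ((∫ t in (0:ℝ)..ω, (Φ t - 1) 0 k) + ω * (1 : Matrix (Fin (n+1)) (Fin (n+1)) ℝ) 0 k) * a k j
        = (∑ k, ω * (1 : Matrix (Fin (n+1)) (Fin (n+1)) ℝ) 0 k * a k j)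
          + ∑ k, a k j * ∫ t in (0:ℝ)..ω, (Φ t - 1) 0 k := by
          rw [← Finset.sum_add_distrib]
          congr 1; funext k; ring
      _ = ω * a 0 j + ∑ k, a k j * ∫ t in (0:ℝ)..ω, (Φ t - 1) 0 k := by rw [h4]
  constructor
  · rw [hkey]
    constructor
    · intro h j
      rw [← hcomp j, h]
      rfl
    · intro h
      funext j
      rw [hcomp j, h j]
      rfl
  · -- the linear algebra part
    set c : Fin (n+1) → ℝ :=
      fun i => (if i = 0 then ω else 0) + ∫ s in (0:ℝ)..ω, (Φ s - 1) 0 i with hcdef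
    have hsum : ∀ j, ω * a 0 j + ∑ i, a i j * (∫ s in (0:ℝ)..ω, (Φ s - 1) 0 i)
        = ∑ i, c i * a i j := by
      intro j
      simp only [hcdef, add_mul, Finset.sum_add_distrib, ite_mul, zero_mul]
      rw [Finset.sum_ite_eq' Finset.univ (0 : Fin (n+1)) (fun i => ω * a i j)]
      simp [mul_comm]
    constructor
    · intro h
      have hc : c ᵥ* a = 0 := by
        funext j
        rw [Matrix.vecMul, dotProduct]
        rw [← hsum j]
        exact h j
      have hdet : IsUnit a.det := (Matrix.isUnit_iff_isUnit_det a).1 ha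
      have hc0 : c = 0 := by
        have := congrArg (fun w => w ᵥ* a⁻¹) hc
        simpa [Matrix.vecMul_vecMul, Matrix.mul_nonsing_inv a hdet] using this
      constructor
      · have := congrFun hc0 0
        simpa [hcdef] using this
      · intro i hi
        have := congrFun hc0 i
        simpa [hcdef, hi] using this
    · rintro ⟨h1, h2⟩ j
      rw [hsum j]
      refine Finset.sum_eq_zero fun i _ => ?_
      rcases eq_or_ne i 0 with rfl | hi
      · have : c 0 = 0 := by simpa [hcdef] using h1
        rw [this, zero_mul]
      · have : c i = 0 := by simp only [hcdef, if_neg hi, zero_add]; exact h2 i hi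
        rw [this, zero_mul]
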